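/- Performance difference lemma: for any two policies π and π̃ on a finite discounted MDP, J(π̃) = J(π) + (1/(1−γ)) Σ_s d_π̃(s) Σ_a π̃(a|s) A_π(s,a), where A_π(s,a) = Q_π(s,a) − V_π(s). -/

import Mathlib

open scoped BigOperators

/-- State transition matrix induced by policy `π`: `(Pmat P π) s s' = ∑ a, π s a * P s a s'`. -/
noncomputable def Pmat {S A : Type*} [Fintype A] (P : S → A → S → ℝ) (π : S → A → ℝ) :
    Matrix S S ℝ := fun s s' => ∑ a, π s a * P s a s'

/-- State distribution at time `t` when starting from `p0` and following `π`. -/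
noncomputable def stateDist {S A : Type*} [Fintype S] [DecidableEq S] [Fintype A]
    (P : S → A → S → ℝ) (π : S → A → ℝ) (p0 : S → ℝ) (t : ℕ) : S → ℝ :=
  (((Pmat P π).transpose) ^ t).mulVec p0

/-- Discounted state distribution `d_π(s) = (1-γ) ∑ γ^t Pr(s_t = s)`. -/
noncomputable def dDist {S A : Type*} [Fintype S] [DecidableEq S] [Fintype A]
    (P : S → A → S → ℝ) (π : S → A → ℝ) (p0 : S → ℝ) (γ : ℝ) (s : S) : ℝ :=
  (1 - γ) * ∑' t : ℕ, γ ^ t * stateDist P π p0 t s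

/-- Expected discounted return `J(π)` with initial distribution `p0`. -/
noncomputable def Jret {S A : Type*} [Fintype S] [DecidableEq S] [Fintype A]
    (P : S → A → S → ℝ) (π : S → A → ℝ) (r : S → A → ℝ) (p0 : S → ℝ) (γ : ℝ) : ℝ :=
  ∑' t : ℕ, γ ^ t * ∑ s, stateDist P π p0 t s * ∑ a, π s a * r s a

/-- Value function `V_π(s)`: return starting deterministically from `s`. -/
noncomputable def Vval {S A : Type*} [Fintype S] [Fintype A] [DecidableEq S]
    (P : S → A → S → ℝ) (π : S → A → ℝ) (r : S → A → ℝ) (γ : ℝ) (s : S) : ℝ :=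
  Jret P π r (fun s' => if s' = s then 1 else 0) γ

/-- Action-value function `Q_π(s,a)`. -/
noncomputable def Qval {S A : Type*} [Fintype S] [Fintype A] [DecidableEq S]
    (P : S → A → S → ℝ) (π : S → A → ℝ) (r : S → A → ℝ) (γ : ℝ) (s : S) (a : A) : ℝ :=
  r s a + γ * ∑ s', P s a s' * Vval P π r γ s'

/-- Advantage function `A_π(s,a) = Q_π(s,a) - V_π(s)`. -/
noncomputable def Adv {S A : Type*} [Fintype S] [Fintype A] [DecidableEq S]
    (P : S → A → S → ℝ) (π : S → A → ℝ) (r : S → A → ℝ) (γ : ℝ) (s : S) (a : A) : ℝ :=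
  Qval P π r γ s a - Vval P π r γ s

section PDLAux
variable {S A : Type*} [Fintype S] [Fintype A] [DecidableEq S]

lemma summable_geom_bound {γ : ℝ} (hγ0 : 0 ≤ γ) (hγ1 : γ < 1) (c : ℕ → ℝ) (C : ℝ)
    (hc : ∀ t, |c t| ≤ C) : Summable (fun t => γ ^ t * c t) := by
  apply Summable.of_norm_bounded
    ((summable_geometric_of_lt_one hγ0 hγ1).mul_left C)
  intro t
  have h1 : 0 ≤ γ ^ t := pow_nonneg hγ0 t
  have h2 := hc t
  have h3 : 0 ≤ |c t| := abs_nonneg _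
  rw [Real.norm_eq_abs, abs_mul, abs_of_nonneg h1]
  nlinarith

lemma abs_inner_le (p g : S → ℝ) (hp0 : ∀ s, 0 ≤ p s) (hp1 : ∑ s, p s = 1) :
    |∑ s, p s * g s| ≤ ∑ s, |g s| := by
  calc |∑ s, p s * g s| ≤ ∑ s, |p s * g s| := Finset.abs_sum_le_sum_abs _ _
    _ ≤ ∑ s, |g s| := by
        apply Finset.sum_le_sum
        intro s _
        rw [abs_mul, abs_of_nonneg (hp0 s)]
        have hle : p s ≤ 1 := by
          rw [← hp1]
          exact Finset.single_le_sum (fun i _ => hp0 i) (Finset.mem_univ s)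
        nlinarith [abs_nonneg (g s)]

lemma mulVecT_apply (P : S → A → S → ℝ) (π : S → A → ℝ) (p : S → ℝ) (s : S) :
    (Pmat P π).transpose.mulVec p s = ∑ s', Pmat P π s' s * p s' := by
  simp [Matrix.mulVec, dotProduct, Matrix.transpose_apply]

lemma step_prob (P : S → A → S → ℝ) (π : S → A → ℝ)
    (hP0 : ∀ s a s', 0 ≤ P s a s') (hP1 : ∀ s a, ∑ s', P s a s' = 1)
    (hπ0 : ∀ s a, 0 ≤ π s a) (hπ1 : ∀ s, ∑ a, π s a = 1)
    (p : S → ℝ) (hp0 : ∀ s, 0 ≤ p s) (hp1 : ∑ s, p s = 1) :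
    (∀ s, 0 ≤ (Pmat P π).transpose.mulVec p s) ∧
      ∑ s, (Pmat P π).transpose.mulVec p s = 1 := by
  have hPm0 : ∀ s s', 0 ≤ Pmat P π s s' := fun s s' =>
    Finset.sum_nonneg fun a _ => mul_nonneg (hπ0 s a) (hP0 s a s')
  have hPm1 : ∀ s, ∑ s', Pmat P π s s' = 1 := by
    intro s
    simp only [Pmat]
    rw [Finset.sum_comm]
    calc ∑ a, ∑ s', π s a * P s a s' = ∑ a, π s a * ∑ s', P s a s' := by
          simp [Finset.mul_sum]
      _ = 1 := by simp [hP1, hπ1]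
  constructor
  · intro s
    rw [mulVecT_apply]
    exact Finset.sum_nonneg fun s' _ => mul_nonneg (hPm0 s' s) (hp0 s')
  · simp only [mulVecT_apply]
    rw [Finset.sum_comm]
    calc ∑ s', ∑ s, Pmat P π s' s * p s' = ∑ s', p s' * ∑ s, Pmat P π s' s := by
          simp [Finset.mul_sum, mul_comm]
      _ = 1 := by simp [hPm1, hp1]

lemma stateDist_zero (P : S → A → S → ℝ) (π : S → A → ℝ) (p0 : S → ℝ) :
    stateDist P π p0 0 = p0 := by
  simp [stateDist, Matrix.one_mulVec]

lemma stateDist_succ (P : S → A → S → ℝ) (π : S → A → ℝ) (p0 : S → ℝ) (t : ℕ) :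
    stateDist P π p0 (t + 1) = stateDist P π ((Pmat P π).transpose.mulVec p0) t := by
  simp [stateDist, pow_succ, ← Matrix.mulVec_mulVec]

lemma stateDist_prob (P : S → A → S → ℝ) (π : S → A → ℝ)
    (hP0 : ∀ s a s', 0 ≤ P s a s') (hP1 : ∀ s a, ∑ s', P s a s' = 1)
    (hπ0 : ∀ s a, 0 ≤ π s a) (hπ1 : ∀ s, ∑ a, π s a = 1)
    (p0 : S → ℝ) (hp0 : ∀ s, 0 ≤ p0 s) (hp1 : ∑ s, p0 s = 1) (t : ℕ) :
    (∀ s, 0 ≤ stateDist P π p0 t s) ∧ ∑ s, stateDist P π p0 t s = 1 := by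
  induction t generalizing p0 with
  | zero => rw [stateDist_zero]; exact ⟨hp0, hp1⟩
  | succ t ih =>
      rw [stateDist_succ]
      obtain ⟨h1, h2⟩ := step_prob P π hP0 hP1 hπ0 hπ1 p0 hp0 hp1
      exact ih _ h1 h2

lemma summable_Jret (P : S → A → S → ℝ) (π π' : S → A → ℝ) (r : S → A → ℝ) {γ : ℝ}
    (hγ0 : 0 ≤ γ) (hγ1 : γ < 1)
    (hP0 : ∀ s a s', 0 ≤ P s a s') (hP1 : ∀ s a, ∑ s', P s a s' = 1)
    (hπ0 : ∀ s a, 0 ≤ π s a) (hπ1 : ∀ s, ∑ a, π s a = 1)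
    (p0 : S → ℝ) (hp0 : ∀ s, 0 ≤ p0 s) (hp1 : ∑ s, p0 s = 1) (g : S → ℝ) :
    Summable (fun t => γ ^ t * ∑ s, stateDist P π p0 t s * g s) := by
  apply summable_geom_bound hγ0 hγ1 _ (∑ s, |g s|)
  intro t
  obtain ⟨h1, h2⟩ := stateDist_prob P π hP0 hP1 hπ0 hπ1 p0 hp0 hp1 t
  exact abs_inner_le _ _ h1 h2

lemma delta_prob (s0 : S) :
    (∀ s, 0 ≤ (if s = s0 then (1:ℝ) else 0)) ∧
      ∑ s, (if s = s0 then (1:ℝ) else 0) = 1 := by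
  constructor
  · intro s; split <;> norm_num
  · simp

lemma Jret_rec (P : S → A → S → ℝ) (π : S → A → ℝ) (r : S → A → ℝ) {γ : ℝ}
    (hγ0 : 0 ≤ γ) (hγ1 : γ < 1)
    (hP0 : ∀ s a s', 0 ≤ P s a s') (hP1 : ∀ s a, ∑ s', P s a s' = 1)
    (hπ0 : ∀ s a, 0 ≤ π s a) (hπ1 : ∀ s, ∑ a, π s a = 1)
    (p0 : S → ℝ) (hp0 : ∀ s, 0 ≤ p0 s) (hp1 : ∑ s, p0 s = 1) :
    Jret P π r p0 γ = (∑ s, p0 s * ∑ a, π s a * r s a) +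
      γ * Jret P π r ((Pmat P π).transpose.mulVec p0) γ := by
  have hsum := summable_Jret P π π r hγ0 hγ1 hP0 hP1 hπ0 hπ1 p0 hp0 hp1
    (fun s => ∑ a, π s a * r s a)
  rw [Jret, hsum.tsum_eq_zero_add]
  congr 1
  · simp [stateDist_zero]
  · rw [Jret, ← tsum_mul_left]
    congr 1
    ext t
    rw [stateDist_succ]
    ring

lemma stateDist_delta (P : S → A → S → ℝ) (π : S → A → ℝ) (t : ℕ) (s s0 : S) :
    stateDist P π (fun s' => if s' = s0 then 1 else 0) t s =
      ((Pmat P π).transpose ^ t) s s0 := by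
  simp [stateDist, Matrix.mulVec, dotProduct]

lemma stateDist_linear (P : S → A → S → ℝ) (π : S → A → ℝ) (p0 : S → ℝ) (t : ℕ) (s : S) :
    stateDist P π p0 t s =
      ∑ s0, p0 s0 * stateDist P π (fun s' => if s' = s0 then 1 else 0) t s := by
  simp only [stateDist_delta]
  simp [stateDist, Matrix.mulVec, dotProduct, mul_comm]

lemma Jret_linear (P : S → A → S → ℝ) (π : S → A → ℝ) (r : S → A → ℝ) {γ : ℝ}
    (hγ0 : 0 ≤ γ) (hγ1 : γ < 1)
    (hP0 : ∀ s a s', 0 ≤ P s a s') (hP1 : ∀ s a, ∑ s', P s a s' = 1)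
    (hπ0 : ∀ s a, 0 ≤ π s a) (hπ1 : ∀ s, ∑ a, π s a = 1)
    (p0 : S → ℝ) :
    Jret P π r p0 γ = ∑ s0, p0 s0 * Vval P π r γ s0 := by
  have hterm : ∀ s0 : S, Summable (fun t => p0 s0 * (γ ^ t *
      ∑ s, stateDist P π (fun s' => if s' = s0 then 1 else 0) t s * ∑ a, π s a * r s a)) := by
    intro s0
    obtain ⟨hd0, hd1⟩ := delta_prob (S := S) s0
    exact (summable_Jret P π π r hγ0 hγ1 hP0 hP1 hπ0 hπ1 _ hd0 hd1 _).mul_left _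
  calc Jret P π r p0 γ
      = ∑' t : ℕ, ∑ s0, p0 s0 * (γ ^ t *
          ∑ s, stateDist P π (fun s' => if s' = s0 then 1 else 0) t s *
            ∑ a, π s a * r s a) := by
        rw [Jret]
        congr 1
        ext t
        obtain ⟨R, hR⟩ : ∃ R : S → ℝ, ∀ s, (∑ a, π s a * r s a) = R s := ⟨_, fun _ => rfl⟩
        have h1 : ∀ s, stateDist P π p0 t s =
            ∑ s0, ((Pmat P π).transpose ^ t) s s0 * p0 s0 := by
          intro s; simp [stateDist, Matrix.mulVec, dotProduct]
        simp only [hR, h1, stateDist_delta, Finset.mul_sum, Finset.sum_mul]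
        rw [Finset.sum_comm]
        exact Finset.sum_congr rfl fun s0 _ => Finset.sum_congr rfl fun s _ => by ring
    _ = ∑ s0, p0 s0 * Vval P π r γ s0 := by
        rw [Summable.tsum_finsetSum (fun s0 _ => hterm s0)]
        congr 1
        ext s0
        rw [Vval, Jret, ← tsum_mul_left]

lemma stateDist_succ' (P : S → A → S → ℝ) (π : S → A → ℝ) (p0 : S → ℝ) (t : ℕ) (s : S) :
    stateDist P π p0 (t + 1) s = ∑ s', Pmat P π s' s * stateDist P π p0 t s' := by
  have h : stateDist P π p0 (t + 1) =
      (Pmat P π).transpose.mulVec (stateDist P π p0 t) := by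
    simp [stateDist, pow_succ', Matrix.mulVec_mulVec]
  rw [h, mulVecT_apply]

end PDLAux

set_option maxHeartbeats 2000000 in
theorem performance_difference_lemma {S A : Type*}
    [Fintype S] [Fintype A] [DecidableEq S]
    (P : S → A → S → ℝ) (π πt : S → A → ℝ) (r : S → A → ℝ) (p0 : S → ℝ) (γ : ℝ)
    (hγ0 : 0 ≤ γ) (hγ1 : γ < 1)
    (hP0 : ∀ s a s', 0 ≤ P s a s') (hP1 : ∀ s a, ∑ s', P s a s' = 1)
    (hπ0 : ∀ s a, 0 ≤ π s a) (hπ1 : ∀ s, ∑ a, π s a = 1)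
    (hπt0 : ∀ s a, 0 ≤ πt s a) (hπt1 : ∀ s, ∑ a, πt s a = 1)
    (hp00 : ∀ s, 0 ≤ p0 s) (hp01 : ∑ s, p0 s = 1) :
    Jret P πt r p0 γ = Jret P π r p0 γ +
      (1 / (1 - γ)) * ∑ s, dDist P πt p0 γ s * ∑ a, πt s a * Adv P π r γ s a := by
  set f : S → ℝ := fun s => ∑ a, πt s a * Adv P π r γ s a with hfdef
  -- expansion of the advantage under πt
  have hf : ∀ s, f s = (∑ a, πt s a * r s a)
      + γ * (∑ s', Pmat P πt s s' * Vval P π r γ s') - Vval P π r γ s := by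
    intro s
    have h2 : ∑ s', Pmat P πt s s' * Vval P π r γ s'
        = ∑ a, πt s a * ∑ s', P s a s' * Vval P π r γ s' := by
      simp only [Pmat, Finset.sum_mul, Finset.mul_sum]
      rw [Finset.sum_comm]
      exact Finset.sum_congr rfl fun a _ => Finset.sum_congr rfl fun s' _ => by ring
    have h3 : f s = ∑ a, (πt s a * r s a
        + γ * (πt s a * ∑ s', P s a s' * Vval P π r γ s') - πt s a * Vval P π r γ s) := by
      rw [hfdef]
      exact Finset.sum_congr rfl fun a _ => by simp only [Adv, Qval]; ring
    rw [h3, Finset.sum_sub_distrib, Finset.sum_add_distrib, ← Finset.mul_sum,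
      ← Finset.sum_mul, hπt1 s, h2]
    ring
  -- flow identity
  have hflow : ∀ t, ∑ s, stateDist P πt p0 t s * (∑ s', Pmat P πt s s' * Vval P π r γ s')
      = ∑ s', stateDist P πt p0 (t + 1) s' * Vval P π r γ s' := by
    intro t
    simp only [stateDist_succ', Finset.mul_sum, Finset.sum_mul]
    rw [Finset.sum_comm]
    exact Finset.sum_congr rfl fun s' _ => Finset.sum_congr rfl fun s _ => by ring
  have hprob := stateDist_prob P πt hP0 hP1 hπt0 hπt1 p0 hp00 hp01
  -- Step A: rewrite the dDist-sum as a tsum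
  have hA : ∑ s, dDist P πt p0 γ s * f s
      = (1 - γ) * ∑' t : ℕ, γ ^ t * ∑ s, stateDist P πt p0 t s * f s := by
    have hs : ∀ s, dDist P πt p0 γ s * f s
        = (1 - γ) * ∑' t : ℕ, γ ^ t * stateDist P πt p0 t s * f s := by
      intro s
      rw [dDist, mul_assoc, ← tsum_mul_right]
    have hsum : ∀ s ∈ Finset.univ (α := S),
        Summable (fun t : ℕ => γ ^ t * stateDist P πt p0 t s * f s) := by
      intro s _
      have := summable_geom_bound hγ0 hγ1 (fun t => stateDist P πt p0 t s * f s) |f s|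
        (by
          intro t
          obtain ⟨h1, h2⟩ := hprob t
          rw [abs_mul]
          have hle : stateDist P πt p0 t s ≤ 1 := by
            rw [← h2]
            exact Finset.single_le_sum (fun i _ => h1 i) (Finset.mem_univ s)
          rw [abs_of_nonneg (h1 s)]
          nlinarith [abs_nonneg (f s), h1 s])
      simpa [mul_assoc] using this
    simp only [hs]
    rw [← Finset.mul_sum]
    congr 1
    rw [← Summable.tsum_finsetSum hsum]
    exact tsum_congr fun t => by rw [Finset.mul_sum]; exact Finset.sum_congr rfl fun s _ => by ring
  -- Step B: pointwise telescoping identity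
  have hB : ∀ t : ℕ, γ ^ t * ∑ s, stateDist P πt p0 t s * f s
      = γ ^ t * (∑ s, stateDist P πt p0 t s * ∑ a, πt s a * r s a)
        + γ ^ (t + 1) * ∑ s, stateDist P πt p0 (t + 1) s * Vval P π r γ s
        - γ ^ t * ∑ s, stateDist P πt p0 t s * Vval P π r γ s := by
    intro t
    have e1 : ∑ s, stateDist P πt p0 t s * f s
        = (∑ s, stateDist P πt p0 t s * ∑ a, πt s a * r s a)
          + γ * (∑ s, stateDist P πt p0 (t + 1) s * Vval P π r γ s)
          - ∑ s, stateDist P πt p0 t s * Vval P π r γ s := by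
      rw [← hflow t]
      have h4 : ∀ s, stateDist P πt p0 t s * f s
          = stateDist P πt p0 t s * (∑ a, πt s a * r s a)
            + γ * (stateDist P πt p0 t s * (∑ s', Pmat P πt s s' * Vval P π r γ s'))
            - stateDist P πt p0 t s * Vval P π r γ s := by
        intro s; rw [hf s]; ring
      simp only [h4]
      rw [Finset.sum_sub_distrib, Finset.sum_add_distrib, ← Finset.mul_sum]
    rw [e1, pow_succ]
    ring
  -- summability facts
  have su_rt : Summable (fun t : ℕ => γ ^ t *
      ∑ s, stateDist P πt p0 t s * ∑ a, πt s a * r s a) :=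
    summable_Jret P πt πt r hγ0 hγ1 hP0 hP1 hπt0 hπt1 p0 hp00 hp01 _
  have su_V : Summable (fun t : ℕ => γ ^ t *
      ∑ s, stateDist P πt p0 t s * Vval P π r γ s) :=
    summable_Jret P πt πt r hγ0 hγ1 hP0 hP1 hπt0 hπt1 p0 hp00 hp01 _
  have su_V1 : Summable (fun t : ℕ => γ ^ (t + 1) *
      ∑ s, stateDist P πt p0 (t + 1) s * Vval P π r γ s) :=
    (summable_nat_add_iff 1).2 su_V
  -- Step C: evaluate the tsum
  have hC : ∑' t : ℕ, γ ^ t * ∑ s, stateDist P πt p0 t s * f s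
      = Jret P πt r p0 γ - ∑ s, p0 s * Vval P π r γ s := by
    have hu0 : γ ^ 0 * ∑ s, stateDist P πt p0 0 s * Vval P π r γ s
        = ∑ s, p0 s * Vval P π r γ s := by
      simp [stateDist_zero]
    calc ∑' t : ℕ, γ ^ t * ∑ s, stateDist P πt p0 t s * f s
        = ∑' t : ℕ, (γ ^ t * (∑ s, stateDist P πt p0 t s * ∑ a, πt s a * r s a)
            + γ ^ (t + 1) * ∑ s, stateDist P πt p0 (t + 1) s * Vval P π r γ s
            - γ ^ t * ∑ s, stateDist P πt p0 t s * Vval P π r γ s) := tsum_congr hB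
      _ = (∑' t : ℕ, γ ^ t * ∑ s, stateDist P πt p0 t s * ∑ a, πt s a * r s a)
            + (∑' t : ℕ, γ ^ (t + 1) * ∑ s, stateDist P πt p0 (t + 1) s * Vval P π r γ s)
            - ∑' t : ℕ, γ ^ t * ∑ s, stateDist P πt p0 t s * Vval P π r γ s := by
          rw [Summable.tsum_sub (su_rt.add su_V1) su_V, Summable.tsum_add su_rt su_V1]
      _ = Jret P πt r p0 γ - ∑ s, p0 s * Vval P π r γ s := by
          rw [su_V.tsum_eq_zero_add, hu0]
          rw [show Jret P πt r p0 γ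
            = ∑' t : ℕ, γ ^ t * ∑ s, stateDist P πt p0 t s * ∑ a, πt s a * r s a from rfl]
          ring
  have hJ : Jret P π r p0 γ = ∑ s, p0 s * Vval P π r γ s :=
    Jret_linear P π r hγ0 hγ1 hP0 hP1 hπ0 hπ1 p0
  have hne : (1 : ℝ) - γ ≠ 0 := by linarith
  rw [show (∑ s, dDist P πt p0 γ s * ∑ a, πt s a * Adv P π r γ s a)
      = ∑ s, dDist P πt p0 γ s * f s from rfl, hA, hC, ← hJ]
  field_simp
  ring
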